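/- Let d ≥ 1, D, G > 0 and 0 < η ≤ 1/(5DG). Let w, μ ∈ ℝ^d with ‖w − μ‖ ≤ D, let g ∈ ℝ^d with ‖g‖ ≤ G, and let Σ be a d×d real symmetric positive definite matrix. Define ℓ(u) = −η⟨w − u, g⟩ + η²(⟨u − w, g⟩)². Then (2π)^{−d/2}·(det Σ)^{−1/2}·∫_{ℝ^d} exp(−ℓ(u))·exp(−(1/2)·⟨u − μ, Σ^{−1}(u − μ)⟩) du ≤ exp(−ℓ(μ)). -/

import Mathlib

open Matrix MeasureTheory

lemma aux_gauss (b c : ℝ) (hb : 0 < b) :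
    ∫ t : ℝ, Real.exp (-b*t^2 + c*t) = Real.sqrt (Real.pi/b) * Real.exp (c^2/(4*b)) := by
  have h : ∀ t : ℝ, -b*t^2 + c*t = -b*(t - c/(2*b))^2 + c^2/(4*b) := by
    intro t; field_simp; ring
  simp_rw [h, Real.exp_add]
  rw [MeasureTheory.integral_mul_const]
  rw [integral_sub_right_eq_self (fun t : ℝ => Real.exp (-b*t^2)) (c/(2*b))]
  rw [integral_gaussian]

lemma aux_oneD (η m σ : ℝ) (hη : 0 < η) (hm : η * |m| ≤ 1/5) :
    (2*Real.pi) ^ (-(1:ℝ)/2) *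
      ∫ t : ℝ, Real.exp (-(η*(σ*t+m)) - η^2*(σ*t+m)^2) * Real.exp (-(1/2)*t^2)
      ≤ Real.exp (-(η*m) - η^2*m^2) := by
  set b : ℝ := η^2*σ^2 + 1/2 with hbdef
  set c : ℝ := -(η*σ) - 2*η^2*σ*m with hcdef
  have hb : 0 < b := by positivity
  have hpt : ∀ t : ℝ, Real.exp (-(η*(σ*t+m)) - η^2*(σ*t+m)^2) * Real.exp (-(1/2)*t^2)
      = Real.exp (-(η*m) - η^2*m^2) * Real.exp (-b*t^2 + c*t) := by
    intro t
    rw [← Real.exp_add, ← Real.exp_add]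
    congr 1
    rw [hbdef, hcdef]; ring
  simp_rw [hpt]
  rw [MeasureTheory.integral_const_mul, aux_gauss b c hb]
  -- now: (2π)^(-1/2) * (exp d0 * (√(π/b) * exp (c²/(4b)))) ≤ exp d0
  set s : ℝ := 2*η^2*σ^2 with hsdef
  have hs : 0 ≤ s := by positivity
  have h2b : 2*b = 1 + s := by rw [hbdef, hsdef]; ring
  -- bound on (1+2ηm)^2
  have hm1 : η*m ≤ 1/5 := le_trans (by nlinarith [le_abs_self m]) hm
  have hm2 : -(1/5) ≤ η*m := by nlinarith [neg_abs_le m]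
  have hq : (1+2*(η*m))^2 ≤ 2 := by nlinarith
  have hc2 : c^2 = s/2 * (1+2*(η*m))^2 := by rw [hcdef, hsdef]; ring
  have hlog : s/(1+s) ≤ Real.log (1+s) := by
    have h1 : Real.log ((1+s)⁻¹) ≤ (1+s)⁻¹ - 1 :=
      Real.log_le_sub_one_of_pos (by positivity)
    rw [Real.log_inv] at h1
    have h2 : (1:ℝ) - (1+s)⁻¹ = s/(1+s) := by field_simp; ring
    linarith
  have hE : c^2/(4*b) ≤ Real.log (1+s) / 2 := by
    have hcs : c^2 ≤ s := by
      rw [hc2]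
      nlinarith [hq, hs]
    have h4b : 4*b = 2*(1+s) := by linarith
    have h1 : c^2/(4*b) ≤ s/(2*(1+s)) := by
      rw [div_le_div_iff₀ (by positivity) (by positivity)]
      nlinarith
    have h3 : s/(2*(1+s)) = (s/(1+s))/2 := by rw [div_div, mul_comm]
    linarith
  -- final numeric assembly
  have hkey : Real.exp (c^2/(4*b)) ≤ Real.sqrt (2*b) := by
    calc Real.exp (c^2/(4*b)) ≤ Real.exp (Real.log (1+s) / 2) := Real.exp_le_exp.2 hE
    _ = Real.sqrt (1+s) := by
        rw [← Real.log_sqrt (by positivity), Real.exp_log (Real.sqrt_pos.2 (by positivity))]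
    _ = Real.sqrt (2*b) := by rw [h2b]
  have hP : (2*Real.pi) ^ (-(1:ℝ)/2) * (Real.sqrt (Real.pi/b) * Real.exp (c^2/(4*b))) ≤ 1 := by
    have e1 : (2*Real.pi) ^ (-(1:ℝ)/2) = (Real.sqrt (2*Real.pi))⁻¹ := by
      rw [show (-(1:ℝ)/2) = -(1/2) by ring, Real.rpow_neg (by positivity),
        ← Real.sqrt_eq_rpow]
    rw [e1]
    rw [inv_mul_le_iff₀ (Real.sqrt_pos.2 (by positivity)), mul_one]
    have e2 : Real.sqrt (Real.pi/b) = Real.sqrt Real.pi / Real.sqrt b :=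
      Real.sqrt_div Real.pi_pos.le b
    have e3 : Real.sqrt (2*b) * (Real.sqrt Real.pi / Real.sqrt b) = Real.sqrt (2*Real.pi) := by
      rw [← e2, ← Real.sqrt_mul (by positivity)]
      congr 1
      field_simp [hb.ne']
    rw [e2, ← e3]
    have hdnn : 0 ≤ Real.sqrt Real.pi / Real.sqrt b := by positivity
    calc Real.sqrt Real.pi / Real.sqrt b * Real.exp (c ^ 2 / (4 * b))
        = Real.exp (c ^ 2 / (4 * b)) * (Real.sqrt Real.pi / Real.sqrt b) := by ring
      _ ≤ Real.sqrt (2*b) * (Real.sqrt Real.pi / Real.sqrt b) :=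
          mul_le_mul_of_nonneg_right hkey hdnn
  calc (2*Real.pi) ^ (-(1:ℝ)/2) *
        (Real.exp (-(η*m) - η^2*m^2) * (Real.sqrt (Real.pi/b) * Real.exp (c^2/(4*b))))
      = Real.exp (-(η*m) - η^2*m^2) *
        ((2*Real.pi) ^ (-(1:ℝ)/2) * (Real.sqrt (Real.pi/b) * Real.exp (c^2/(4*b)))) := by ring
    _ ≤ Real.exp (-(η*m) - η^2*m^2) * 1 :=
        mul_le_mul_of_nonneg_left hP (Real.exp_nonneg _)
    _ = Real.exp (-(η*m) - η^2*m^2) := mul_one _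

set_option maxHeartbeats 2000000 in
/-- Lemma 9 of the paper (Gaussian exp-concavity, full case): the Gaussian expectation of
`e^{−ℓ(u)}` under `u ~ N(μ, Σ)` with `μ` at distance at most `D` from `w` is at most
`e^{−ℓ(μ)}`, written as an explicit Lebesgue integral against the Gaussian density.
Here `ℝ^d` is modelled as `Fin d → ℝ` with the explicit Euclidean norm. -/
theorem stmt_12 {d : ℕ} (hd : 1 ≤ d) (D G η : ℝ) (hD : 0 < D) (hG : 0 < G)
    (hη : 0 < η) (hη' : η ≤ 1 / (5 * D * G))
    (w μ g : Fin d → ℝ)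
    (hwμ : Real.sqrt (∑ i, (w i - μ i) ^ 2) ≤ D)
    (hg : Real.sqrt (∑ i, (g i) ^ 2) ≤ G)
    (S : Matrix (Fin d) (Fin d) ℝ) (hS : S.PosDef)
    (ℓ : (Fin d → ℝ) → ℝ)
    (hℓ : ∀ u, ℓ u = -η * ((w - u) ⬝ᵥ g) + η ^ 2 * ((u - w) ⬝ᵥ g) ^ 2) :
    (2 * Real.pi) ^ (-(d : ℝ) / 2) * S.det ^ (-(1 : ℝ) / 2) *
        ∫ u : Fin d → ℝ,
          Real.exp (-ℓ u) * Real.exp (-(1 / 2) * ((u - μ) ⬝ᵥ S⁻¹.mulVec (u - μ))) ≤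
      Real.exp (-ℓ μ) := by
  haveI : NeZero d := ⟨by omega⟩
  classical
  open scoped MatrixOrder in
  set A := CFC.sqrt S with hAdef
  have hAS : A * A = S := by
    open scoped MatrixOrder in exact CFC.sqrt_mul_sqrt_self S hS.posSemidef.nonneg
  have hAH : Aᵀ = A := by
    have h : A.IsHermitian := by
      open scoped MatrixOrder in exact (CFC.sqrt_nonneg S).posSemidef.1
    rwa [Matrix.IsHermitian, Matrix.conjTranspose_eq_transpose_of_trivial] at h
  have hdS : 0 < S.det := hS.det_pos
  have hAA : A.det * A.det = S.det := by rw [← Matrix.det_mul, hAS]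
  have hdA : A.det ≠ 0 := by
    intro h; rw [h, zero_mul] at hAA; exact hdS.ne hAA
  have habsA : |A.det| = Real.sqrt S.det := by
    rw [← hAA, ← sq, Real.sqrt_sq_eq_abs]
  have hAunit : IsUnit A.det := isUnit_iff_ne_zero.mpr hdA
  -- Euclidean vector
  set hE : EuclideanSpace ℝ (Fin d) := (WithLp.equiv 2 (Fin d → ℝ)).symm (A.mulVec g) with hEdef
  set σ := ‖hE‖ with hσdef
  have hEapp : ∀ i, hE i = (A.mulVec g) i := fun i => rfl
  obtain ⟨bB, hbB⟩ : ∃ bB : OrthonormalBasis (Fin d) ℝ (EuclideanSpace ℝ (Fin d)),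
      ∀ j, (∑ i, bB j i * (A.mulVec g) i) = σ * (if j = 0 then 1 else 0) := by
    by_cases hcase : hE = 0
    · refine ⟨EuclideanSpace.basisFun (Fin d) ℝ, fun j => ?_⟩
      have hg0 : ∀ i, (A.mulVec g) i = 0 := by
        intro i; rw [← hEapp i, hcase]; rfl
      simp [hg0, hσdef, hcase]
    · have hvnorm : ‖(‖hE‖⁻¹ • hE : EuclideanSpace ℝ (Fin d))‖ = 1 := norm_smul_inv_norm hcase
      have hortho : Orthonormal ℝ (({0} : Set (Fin d)).restrict
          (fun _ : Fin d => (‖hE‖⁻¹ • hE : EuclideanSpace ℝ (Fin d)))) := by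
        constructor
        · intro i; exact hvnorm
        · intro i j hij
          exact absurd (Subtype.ext (by
            have hi := i.2; have hj := j.2
            simp only [Set.mem_singleton_iff] at hi hj
            rw [hi, hj])) hij
      obtain ⟨bB, hbB0⟩ := hortho.exists_orthonormalBasis_extension_of_card_eq
        (by simp)
      refine ⟨bB, fun j => ?_⟩
      have hb0 : bB 0 = ‖hE‖⁻¹ • hE := hbB0 0 rfl
      have h1 : (∑ i, bB j i * (A.mulVec g) i) = inner ℝ (bB j) hE := by
        rw [PiLp.inner_apply]
        simp [hEapp, mul_comm]
      rw [h1]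
      have hEeq : hE = ‖hE‖ • bB 0 := by
        rw [hb0, smul_inv_smul₀ (norm_ne_zero_iff.2 hcase)]
      have h2 := orthonormal_iff_ite.mp bB.orthonormal j 0
      rw [hEeq, inner_smul_right, h2]
  -- orthogonal matrix Q
  set Q : Matrix (Fin d) (Fin d) ℝ := Matrix.of (fun i j => bB j i) with hQdef
  have hQTQ : Qᵀ * Q = 1 := by
    ext j k
    rw [Matrix.mul_apply, Matrix.one_apply]
    have h2 := orthonormal_iff_ite.mp bB.orthonormal j k
    rw [PiLp.inner_apply] at h2
    simpa [hQdef, mul_comm] using h2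
  have hdetQ : |Q.det| = 1 := by
    have h1 : Q.det * Q.det = 1 := by
      have h := congrArg Matrix.det hQTQ
      rwa [Matrix.det_mul, Matrix.det_transpose, Matrix.det_one] at h
    nlinarith [abs_nonneg Q.det, sq_abs Q.det]
  have hdQ0 : Q.det ≠ 0 := by
    intro h; rw [h, abs_zero] at hdetQ; norm_num at hdetQ
  set M := A * Q with hMdef
  have hdetM : M.det ≠ 0 := by
    rw [hMdef, Matrix.det_mul]; exact mul_ne_zero hdA hdQ0
  have habsM : |M.det| = Real.sqrt S.det := by
    rw [hMdef, Matrix.det_mul, abs_mul, hdetQ, mul_one, habsA]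
  -- key identities
  have key2 : ∀ y : Fin d → ℝ, (M.mulVec y) ⬝ᵥ g = σ * y 0 := by
    intro y
    have e1 : Mᵀ.mulVec g = fun j => σ * (if j = 0 then 1 else 0) := by
      funext j
      rw [hMdef, Matrix.transpose_mul, hAH, ← Matrix.mulVec_mulVec]
      simpa [Matrix.mulVec, dotProduct, hQdef] using hbB j
    rw [dotProduct_comm, Matrix.dotProduct_mulVec, ← Matrix.mulVec_transpose, e1]
    simp [dotProduct, ite_mul, mul_ite]
  have key1 : ∀ y : Fin d → ℝ, (M.mulVec y) ⬝ᵥ S⁻¹.mulVec (M.mulVec y) = y ⬝ᵥ y := by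
    intro y
    have hSinv : S⁻¹ * M = A⁻¹ * Q := by
      rw [← hAS, Matrix.mul_inv_rev, hMdef]
      have h3 : A⁻¹ * (A * Q) = Q := by
        rw [← Matrix.mul_assoc, Matrix.nonsing_inv_mul A hAunit, Matrix.one_mul]
      rw [Matrix.mul_assoc, h3]
    have hNM : ((A⁻¹ * Q)ᵀ) * M = 1 := by
      rw [Matrix.transpose_mul, Matrix.transpose_nonsing_inv, hAH, hMdef]
      have h3 : A⁻¹ * (A * Q) = Q := by
        rw [← Matrix.mul_assoc, Matrix.nonsing_inv_mul A hAunit, Matrix.one_mul]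
      rw [Matrix.mul_assoc, h3, hQTQ]
    rw [Matrix.mulVec_mulVec, hSinv, Matrix.dotProduct_mulVec, ← Matrix.mulVec_transpose,
      Matrix.mulVec_mulVec, hNM, Matrix.one_mulVec]
  -- the scalar mean
  set m : ℝ := (μ - w) ⬝ᵥ g with hmdef
  have hηm : η * |m| ≤ 1/5 := by
    have h1 : ∑ i, (w i - μ i)^2 ≤ D^2 := by
      have h0 : (0:ℝ) ≤ ∑ i, (w i - μ i)^2 := by positivity
      nlinarith [Real.sq_sqrt h0, Real.sqrt_nonneg (∑ i, (w i - μ i)^2)]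
    have h2 : ∑ i, (g i)^2 ≤ G^2 := by
      have h0 : (0:ℝ) ≤ ∑ i, (g i)^2 := by positivity
      nlinarith [Real.sq_sqrt h0, Real.sqrt_nonneg (∑ i, (g i)^2)]
    have hcs := Finset.sum_mul_sq_le_sq_mul_sq Finset.univ (fun i => μ i - w i) g
    have hmeq : m = ∑ i, (μ i - w i) * g i := by
      rw [hmdef]; rfl
    have h3 : ∑ i, (μ i - w i)^2 = ∑ i, (w i - μ i)^2 :=
      Finset.sum_congr rfl (fun i _ => by ring)
    have hm2 : m^2 ≤ (D*G)^2 := by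
      rw [hmeq]
      calc (∑ i, (μ i - w i) * g i)^2 ≤ (∑ i, (μ i - w i)^2) * ∑ i, (g i)^2 := hcs
        _ ≤ D^2 * G^2 := by
            have h0 : (0:ℝ) ≤ ∑ i, (g i)^2 := by positivity
            have h0' : (0:ℝ) ≤ ∑ i, (μ i - w i)^2 := by positivity
            rw [h3] at h0' ⊢
            nlinarith
        _ = (D*G)^2 := by ring
    have hmabs : |m| ≤ D*G := by nlinarith [sq_abs m, abs_nonneg m, mul_pos hD hG]
    have hh1 : η * |m| ≤ η * (D*G) := mul_le_mul_of_nonneg_left hmabs hη.le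
    have hh2 : η * (D*G) ≤ (1/(5*D*G)) * (D*G) :=
      mul_le_mul_of_nonneg_right hη' (by positivity)
    have hh3 : (1/(5*D*G)) * (D*G) = 1/5 := by field_simp
    linarith
  -- the integrand and the product form
  set Φ : (Fin d → ℝ) → ℝ := fun u =>
    Real.exp (-(η*((u - w) ⬝ᵥ g)) - η^2*((u - w) ⬝ᵥ g)^2) *
      Real.exp (-(1/2) * ((u - μ) ⬝ᵥ S⁻¹.mulVec (u - μ))) with hΦdef
  have hint : (fun u => Real.exp (-ℓ u) *
      Real.exp (-(1/2 : ℝ) * ((u - μ) ⬝ᵥ S⁻¹.mulVec (u - μ)))) = Φ := by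
    funext u
    rw [hΦdef]
    congr 2
    rw [hℓ u]
    have h4 : w - u = -(u - w) := (neg_sub u w).symm
    rw [h4, neg_dotProduct]
    ring
  set f : Fin d → ℝ → ℝ := fun i t =>
    (if i = 0 then Real.exp (-(η*(σ*t+m)) - η^2*(σ*t+m)^2) else 1) *
      Real.exp (-(1/2 : ℝ)*t^2) with hfdef
  have hsub : ∀ y : Fin d → ℝ, Φ (M.mulVec y + μ) = ∏ i, f i (y i) := by
    intro y
    have huμ : M.mulVec y + μ - μ = M.mulVec y := add_sub_cancel_right _ _
    have huw : (M.mulVec y + μ - w) ⬝ᵥ g = σ * y 0 + m := by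
      have h5 : M.mulVec y + μ - w = M.mulVec y + (μ - w) := by abel
      rw [h5, add_dotProduct, key2]
    rw [hΦdef]
    simp only [huμ, huw, key1]
    rw [hfdef]
    rw [Finset.prod_mul_distrib,
      Finset.prod_ite_eq' Finset.univ (0 : Fin d)
        (fun i => Real.exp (-(η*(σ*(y i)+m)) - η^2*(σ*(y i)+m)^2))]
    simp only [Finset.mem_univ, if_true]
    congr 1
    rw [← Real.exp_sum]
    congr 1
    simp only [dotProduct, Finset.mul_sum]
    apply Finset.sum_congr rfl
    intro i _
    ring
  -- continuity
  have hΦcont : Continuous Φ := by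
    rw [hΦdef]
    apply Continuous.mul
    · apply Real.continuous_exp.comp
      have hc : Continuous (fun u : Fin d → ℝ => (u - w) ⬝ᵥ g) := by
        simp only [dotProduct]
        exact continuous_finset_sum _ (fun i _ =>
          (((continuous_apply i).sub continuous_const).mul continuous_const))
      fun_prop
    · apply Real.continuous_exp.comp
      have hc : Continuous (fun u : Fin d → ℝ => (u - μ) ⬝ᵥ S⁻¹.mulVec (u - μ)) := by
        simp only [dotProduct, Matrix.mulVec]
        apply continuous_finset_sum _ (fun i _ => Continuous.mul ?_ ?_)
        · exact (continuous_apply i).sub continuous_const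
        · apply continuous_finset_sum _ (fun j _ => Continuous.mul continuous_const ?_)
          exact (continuous_apply j).sub continuous_const
      fun_prop
  -- change of variables
  have hmap := Real.map_matrix_volume_pi_eq_smul_volume_pi (M := M) hdetM
  have hlin : Continuous (Matrix.toLin' M) := LinearMap.continuous_on_pi _
  have step2 : ∫ v, Φ (v + μ) = |M.det| * ∫ y, Φ (M.mulVec y + μ) := by
    have hsm : AEStronglyMeasurable (fun v => Φ (v + μ))
        (Measure.map (Matrix.toLin' M) volume) :=
      (hΦcont.comp (continuous_id.add continuous_const)).aestronglyMeasurable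
    have h2 : ∫ y, Φ (M.mulVec y + μ) = |M.det|⁻¹ * ∫ v, Φ (v + μ) := by
      have h6 : (fun y : Fin d → ℝ => Φ (M.mulVec y + μ))
          = fun y => Φ (Matrix.toLin' M y + μ) := by
        funext y; rw [Matrix.toLin'_apply]
      rw [h6, ← integral_map hlin.measurable.aemeasurable hsm, hmap,
        integral_smul_measure, ENNReal.toReal_ofReal (abs_nonneg _), smul_eq_mul, abs_inv]
    rw [h2, ← mul_assoc, mul_inv_cancel₀ (abs_ne_zero.mpr hdetM), one_mul]
  have step34 : ∫ y : Fin d → ℝ, Φ (M.mulVec y + μ) = ∏ i, ∫ t : ℝ, f i t := by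
    rw [show (fun y : Fin d → ℝ => Φ (M.mulVec y + μ)) = fun y => ∏ i, f i (y i) from
      funext hsub]
    exact MeasureTheory.integral_fintype_prod_eq_prod f
  set I0 : ℝ := ∫ t : ℝ, Real.exp (-(η*(σ*t+m)) - η^2*(σ*t+m)^2) *
      Real.exp (-(1/2 : ℝ)*t^2) with hI0def
  have step5 : ∀ i, (∫ t : ℝ, f i t) = if i = 0 then I0 else Real.sqrt (2*Real.pi) := by
    intro i
    by_cases hi : i = 0
    · simp only [hfdef, hi, if_true, one_mul, hI0def]
    · simp only [hfdef, hi, if_false, one_mul]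
      have hgauss := integral_gaussian (1/2 : ℝ)
      rw [show Real.pi / (1/2 : ℝ) = 2*Real.pi by ring] at hgauss
      rw [← hgauss]
  have step6 : (∏ i, ∫ t : ℝ, f i t) = I0 * Real.sqrt (2*Real.pi) ^ (d - 1) := by
    simp only [step5]
    rw [← Finset.mul_prod_erase Finset.univ _ (Finset.mem_univ (0 : Fin d)), if_pos rfl]
    congr 1
    rw [Finset.prod_congr rfl (fun i hi => if_neg (Finset.ne_of_mem_erase hi)),
      Finset.prod_const, Finset.card_erase_of_mem (Finset.mem_univ _), Finset.card_univ,
      Fintype.card_fin]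
  -- assembling
  have hIeq : ∫ u : Fin d → ℝ,
      Real.exp (-ℓ u) * Real.exp (-(1/2 : ℝ) * ((u - μ) ⬝ᵥ S⁻¹.mulVec (u - μ)))
      = Real.sqrt S.det * (I0 * Real.sqrt (2*Real.pi) ^ (d - 1)) := by
    rw [hint, ← integral_add_right_eq_self Φ μ, step2, step34, step6, habsM]
  rw [hIeq]
  have hdet1 : S.det ^ (-(1:ℝ)/2) * Real.sqrt S.det = 1 := by
    rw [Real.sqrt_eq_rpow, ← Real.rpow_add hdS]
    norm_num
  have hpi : (2*Real.pi) ^ (-(d:ℝ)/2) * Real.sqrt (2*Real.pi) ^ (d-1)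
      = (2*Real.pi) ^ (-(1:ℝ)/2) := by
    rw [Real.sqrt_eq_rpow, ← Real.rpow_natCast ((2*Real.pi) ^ ((1:ℝ)/2)) (d-1),
      ← Real.rpow_mul (by positivity), ← Real.rpow_add (by positivity)]
    congr 1
    rw [Nat.cast_sub hd, Nat.cast_one]
    ring
  have hlμ : -ℓ μ = -(η*m) - η^2*m^2 := by
    rw [hℓ μ]
    have h4 : w - μ = -(μ - w) := (neg_sub μ w).symm
    rw [h4, neg_dotProduct, ← hmdef]
    ring
  calc (2 * Real.pi) ^ (-(d:ℝ) / 2) * S.det ^ (-(1:ℝ) / 2) *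
        (Real.sqrt S.det * (I0 * Real.sqrt (2*Real.pi) ^ (d - 1)))
      = (S.det ^ (-(1:ℝ)/2) * Real.sqrt S.det) *
        (((2*Real.pi) ^ (-(d:ℝ)/2) * Real.sqrt (2*Real.pi) ^ (d-1)) * I0) := by ring
    _ = (2*Real.pi) ^ (-(1:ℝ)/2) * I0 := by rw [hdet1, hpi, one_mul]
    _ ≤ Real.exp (-(η*m) - η^2*m^2) := aux_oneD η m σ hη hηm
    _ = Real.exp (-ℓ μ) := by rw [hlμ]
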